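/- Let q be an odd prime power, g ∈ F_q a non-square, and χ a nontrivial multiplicative character on F_q with χ(−1) = 1. Suppose P(x) ∈ F_q[x] satisfies Σ_{x∈F_q} χ(xP(x²)) = 0 and Σ_{x∈F_q} χ(xP(gx²)) = 0. Then the kernel of the matrix M = [χ(P*(a,b))]_{a,b∈F_q*} has dimension at least 2. -/

import Mathlib

open Finset

section Aux

variable {F : Type*} [Field F] [Fintype F] [DecidableEq F]

lemma aux_sub (χ : MulChar F ℂ) (c : F) (hc : c ≠ 0) (P : Polynomial F) (e : F) :
    ∑ x : F, χ (x * P.eval (c ^ 2 * e * x ^ 2)) =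
      χ c⁻¹ * ∑ y : F, χ (y * P.eval (e * y ^ 2)) := by
  rw [Finset.mul_sum]
  refine (Fintype.sum_bijective (c⁻¹ * ·) (mulLeft_bijective₀ _ (inv_ne_zero hc))
    (fun y : F => χ c⁻¹ * χ (y * P.eval (e * y ^ 2)))
    (fun x : F => χ (x * P.eval (c ^ 2 * e * x ^ 2))) (fun y => ?_)).symm
  show χ c⁻¹ * χ (y * P.eval (e * y ^ 2)) = χ ((c⁻¹ * y) * P.eval (c ^ 2 * e * (c⁻¹ * y) ^ 2))
  have harg : c ^ 2 * e * (c⁻¹ * y) ^ 2 = e * y ^ 2 := by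
    field_simp
  rw [harg, ← map_mul, ← mul_assoc]

lemma aux_key (g : F) (hg : ¬ IsSquare g) (hg0 : g ≠ 0) (χ : MulChar F ℂ) (P : Polynomial F)
    (hsum1 : ∑ x : F, χ (x * P.eval (x ^ 2)) = 0)
    (hsum2 : ∑ x : F, χ (x * P.eval (g * x ^ 2)) = 0)
    (d : F) (hd : d ≠ 0) : ∑ x : F, χ (x * P.eval (d * x ^ 2)) = 0 := by
  by_cases hsq : IsSquare d
  · obtain ⟨c, hc⟩ := hsq
    have hc0 : c ≠ 0 := by rintro rfl; rw [mul_zero] at hc; exact hd hc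
    have hd' : d = c ^ 2 * 1 := by rw [hc]; ring
    rw [hd', aux_sub χ c hc0 P 1]
    simp only [one_mul]
    rw [hsum1, mul_zero]
  · have hgd : IsSquare (g * d) := by
      have h1 : quadraticChar F d = -1 := quadraticChar_neg_one_iff_not_isSquare.mpr hsq
      have h2 : quadraticChar F g = -1 := quadraticChar_neg_one_iff_not_isSquare.mpr hg
      have h3 : quadraticChar F (g * d) = 1 := by rw [map_mul, h1, h2]; ring
      exact (quadraticChar_one_iff_isSquare (mul_ne_zero hg0 hd)).mp h3
    obtain ⟨c, hc⟩ := hgd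
    have hc0 : c ≠ 0 := by
      rintro rfl; rw [mul_zero] at hc; exact (mul_ne_zero hg0 hd) hc
    have hd' : d = (g⁻¹ * c) ^ 2 * g := by
      have hg2 : g⁻¹ * g = 1 := inv_mul_cancel₀ hg0
      linear_combination (g⁻¹ ^ 2 * g) * hc - d * (1 + g⁻¹ * g) * hg2
    rw [hd', aux_sub χ _ (mul_ne_zero (inv_ne_zero hg0) hc0) P g]
    rw [hsum2, mul_zero]

lemma aux_mulvec (χ : MulChar F ℂ) (P : Polynomial F) (c : F) (hc : c ≠ 0) (a : Fˣ) :
    (Matrix.of fun a b : Fˣ =>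
        χ (∑ s ∈ Finset.range (P.natDegree + 1),
            P.coeff s * (a : F) ^ (P.natDegree - s) * (b : F) ^ s)).mulVec
      (fun b : Fˣ => ∑ x : F, if c * x ^ 2 = (b : F) then χ x else 0) a
    = ∑ x : F, χ (x * ∑ s ∈ Finset.range (P.natDegree + 1),
        P.coeff s * (a : F) ^ (P.natDegree - s) * (c * x ^ 2) ^ s) := by
  unfold Matrix.mulVec dotProduct
  simp only [Matrix.of_apply, Finset.mul_sum, mul_ite, mul_zero]
  rw [Finset.sum_comm]
  refine Finset.sum_congr rfl fun x _ => ?_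
  by_cases hx : x = 0
  · subst hx
    simp [MulChar.map_nonunit χ not_isUnit_zero]
  · have hu0 : c * x ^ 2 ≠ 0 := mul_ne_zero hc (pow_ne_zero 2 hx)
    set u : Fˣ := Units.mk0 (c * x ^ 2) hu0 with hu
    have hiff : ∀ b : Fˣ, (c * x ^ 2 = (b : F)) ↔ b = u := by
      intro b
      constructor
      · intro h; exact Units.ext h.symm
      · rintro rfl; rfl
    rw [Finset.sum_congr rfl fun b _ => if_congr (hiff b) rfl rfl,
      Finset.sum_ite_eq' Finset.univ u]
    simp only [Finset.mem_univ, if_true]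
    rw [← map_mul]
    congr 1
    rw [mul_comm, Finset.mul_sum]
    refine Finset.sum_congr rfl fun s _ => ?_
    rw [show ((u : F)) = c * x ^ 2 from rfl]

lemma aux_ker (g : F) (hg : ¬ IsSquare g) (hg0 : g ≠ 0) (χ : MulChar F ℂ) (P : Polynomial F)
    (hsum1 : ∑ x : F, χ (x * P.eval (x ^ 2)) = 0)
    (hsum2 : ∑ x : F, χ (x * P.eval (g * x ^ 2)) = 0)
    (c : F) (hc : c ≠ 0) :
    (fun b : Fˣ => ∑ x : F, if c * x ^ 2 = (b : F) then χ x else 0) ∈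
      LinearMap.ker (Matrix.mulVecLin (Matrix.of fun a b : Fˣ =>
        χ (∑ s ∈ Finset.range (P.natDegree + 1),
            P.coeff s * (a : F) ^ (P.natDegree - s) * (b : F) ^ s))) := by
  rw [LinearMap.mem_ker]
  funext a
  rw [Matrix.mulVecLin_apply, aux_mulvec χ P c hc a]
  show (∑ x : F, χ (x * ∑ s ∈ Finset.range (P.natDegree + 1),
      P.coeff s * (a : F) ^ (P.natDegree - s) * (c * x ^ 2) ^ s)) = (0 : Fˣ → ℂ) a
  have hca : c * (a : F) ≠ 0 := mul_ne_zero hc a.ne_zero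
  have hkey := aux_key g hg hg0 χ P hsum1 hsum2 (c * (a : F)) hca
  set n := P.natDegree with hn
  set A : F := (a : F) with hA
  rw [(Fintype.sum_bijective (A * ·) (mulLeft_bijective₀ A a.ne_zero)
    (fun x : F => χ (A ^ (n + 1)) * χ (x * P.eval ((c * A) * x ^ 2)))
    (fun x : F => χ (x * ∑ s ∈ Finset.range (n + 1),
        P.coeff s * A ^ (n - s) * (c * x ^ 2) ^ s))
    (fun x => ?_)).symm]
  · show (∑ x : F, χ (A ^ (n + 1)) * χ (x * P.eval ((c * A) * x ^ 2))) = 0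
    rw [← Finset.mul_sum, hkey, mul_zero]
  · show χ (A ^ (n + 1)) * χ (x * P.eval ((c * A) * x ^ 2)) =
      χ ((A * x) * ∑ s ∈ Finset.range (n + 1),
        P.coeff s * A ^ (n - s) * (c * (A * x) ^ 2) ^ s)
    rw [← map_mul]
    congr 1
    rw [Polynomial.eval_eq_sum_range, ← hn, Finset.mul_sum, Finset.mul_sum, Finset.mul_sum]
    refine Finset.sum_congr rfl fun s hs => ?_
    have hsle : s ≤ n := Nat.lt_succ_iff.mp (Finset.mem_range.mp hs)
    have h3 : A ^ (n - s) * A ^ (2 * s) = A ^ (n + s) := by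
      rw [← pow_add]; congr 1; omega
    rw [show (A * x) * (P.coeff s * A ^ (n - s) * (c * (A * x) ^ 2) ^ s) =
        (A ^ (n - s) * A ^ (2 * s)) * (A * (P.coeff s * (c ^ s * x ^ (2 * s + 1)))) from by
      ring, h3]
    ring

end Aux

theorem stmt_12 (F : Type*) [Field F] [Fintype F] [DecidableEq F]
    (hodd : Odd (Fintype.card F)) (g : F) (hg : ¬ IsSquare g)
    (χ : MulChar F ℂ) (hχ : χ ≠ 1) (hχ1 : χ (-1) = 1)
    (P : Polynomial F)
    (hsum1 : ∑ x : F, χ (x * P.eval (x ^ 2)) = 0)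
    (hsum2 : ∑ x : F, χ (x * P.eval (g * x ^ 2)) = 0) :
    2 ≤ Module.finrank ℂ
        (LinearMap.ker (Matrix.mulVecLin (Matrix.of fun a b : Fˣ =>
          χ (∑ s ∈ Finset.range (P.natDegree + 1),
              P.coeff s * (a : F) ^ (P.natDegree - s) * (b : F) ^ s)))) := by
  classical
  have hg0 : g ≠ 0 := fun h => hg ⟨0, by rw [h, mul_zero]⟩
  have hchar : ringChar F ≠ 2 := by
    intro h
    have h2 := FiniteField.even_card_of_char_two h
    rw [Nat.odd_iff] at hodd
    omega
  have hne : (-1 : F) ≠ 1 := Ring.neg_one_ne_one_of_char_ne_two hchar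
  set K := LinearMap.ker (Matrix.mulVecLin (Matrix.of fun a b : Fˣ =>
          χ (∑ s ∈ Finset.range (P.natDegree + 1),
              P.coeff s * (a : F) ^ (P.natDegree - s) * (b : F) ^ s))) with hK
  set v : Fˣ → ℂ := fun b => ∑ x : F, if (1 : F) * x ^ 2 = (b : F) then χ x else 0 with hv
  set v' : Fˣ → ℂ := fun b => ∑ x : F, if g * x ^ 2 = (b : F) then χ x else 0 with hv'
  have hvmem : v ∈ K := aux_ker g hg hg0 χ P hsum1 hsum2 1 one_ne_zero
  have hv'mem : v' ∈ K := aux_ker g hg hg0 χ P hsum1 hsum2 g hg0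
  -- evaluations
  have hsq1 : ∀ x : F, x ^ 2 = 1 ↔ x = 1 ∨ x = -1 := by
    intro x
    rw [← sub_eq_zero, show x ^ 2 - 1 = (x - 1) * (x + 1) from by ring, mul_eq_zero,
      sub_eq_zero, add_eq_zero_iff_eq_neg]
  have hpair : (∑ x ∈ ({1, -1} : Finset F), χ x) = 2 := by
    rw [Finset.sum_pair (fun h => hne h.symm), map_one, hχ1]
    norm_num
  set gu : Fˣ := Units.mk0 g hg0 with hgu
  have e1 : v 1 = 2 := by
    rw [hv]
    simp only [Units.val_one, one_mul]
    rw [← Finset.sum_filter]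
    have : Finset.univ.filter (fun x : F => x ^ 2 = 1) = {1, -1} := by
      ext x
      simp [hsq1 x]
    rw [this, hpair]
  have e2 : v' gu = 2 := by
    rw [hv']
    have : ∀ x : F, (g * x ^ 2 = (gu : F)) ↔ x ^ 2 = 1 := by
      intro x
      show g * x ^ 2 = g ↔ _
      constructor
      · intro h; exact mul_left_cancel₀ hg0 (h.trans (mul_one g).symm)
      · intro h; rw [h, mul_one]
    simp only [this]
    rw [← Finset.sum_filter]
    have hf : Finset.univ.filter (fun x : F => x ^ 2 = 1) = {1, -1} := by
      ext x
      simp [hsq1 x]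
    rw [hf, hpair]
  have e3 : v gu = 0 := by
    rw [hv]
    refine Finset.sum_eq_zero fun x _ => if_neg fun h => ?_
    exact hg ⟨x, by rw [show ((gu : F)) = g from rfl] at h; rw [← h]; ring⟩
  have e4 : v' 1 = 0 := by
    rw [hv']
    refine Finset.sum_eq_zero fun x _ => if_neg fun h => ?_
    rw [Units.val_one] at h
    have hx : x ≠ 0 := by rintro rfl; simp at h
    refine hg ⟨x⁻¹, ?_⟩
    field_simp
    linear_combination h
  have hind : LinearIndependent ℂ ![v, v'] := by
    rw [LinearIndependent.pair_iff]
    intro s t hst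
    have h1 := congrFun hst 1
    have h2 := congrFun hst gu
    simp only [Pi.add_apply, Pi.smul_apply, Pi.zero_apply, smul_eq_mul, e1, e2, e3, e4,
      mul_zero, add_zero, zero_add] at h1 h2
    constructor
    · have : s * 2 = 0 := h1
      simpa using this
    · have : t * 2 = 0 := h2
      simpa using this
  have hw : LinearIndependent ℂ (![(⟨v, hvmem⟩ : K), ⟨v', hv'mem⟩] : Fin 2 → K) := by
    apply LinearIndependent.of_comp K.subtype
    have : K.subtype ∘ (![(⟨v, hvmem⟩ : K), ⟨v', hv'mem⟩] : Fin 2 → K) = ![v, v'] := by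
      funext i
      fin_cases i <;> rfl
    rw [this]
    exact hind
  have := hw.fintype_card_le_finrank
  simpa using this
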